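/- Let X* ∈ ℝ^d be a zero-mean random vector with max_{j} E|X*_j|⁴ ≤ ν⁴‖Σ‖² for ν ≥ 1, and let X'(τ) be the entrywise truncation at level τ. Then ‖E X'(τ) X'(τ)ᵀ − E X* X*ᵀ‖_∞ ≤ 2ν⁴‖Σ‖²/τ², where ‖·‖_∞ is the maximum absolute matrix entry. -/

import Mathlib

open MeasureTheory

/-- Entrywise truncation at level τ. -/
noncomputable def trunc (τ x : ℝ) : ℝ := if |x| ≤ τ then x else 0


lemma abmul (τ a b : ℝ) (hτ : 0 < τ) (h : τ < |a|) :
    |a * b| * τ ^ 2 ≤ |a| ^ 4 + |b| ^ 4 := by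
  have ha : 0 ≤ |a| := abs_nonneg a
  have hb : 0 ≤ |b| := abs_nonneg b
  rw [abs_mul]
  have h1 : |a| * |b| * τ ^ 2 ≤ |a| * |b| * |a| ^ 2 := by
    have := mul_le_mul_of_nonneg_left (pow_le_pow_left₀ hτ.le h.le 2) (mul_nonneg ha hb)
    linarith
  nlinarith [sq_nonneg (|a| * |b| - |a| ^ 2), sq_nonneg (|a| ^ 2 - |b| ^ 2), mul_nonneg (abs_nonneg a) (abs_nonneg b)]

lemma trunc_key (τ a b : ℝ) (hτ : 0 < τ) :
    |trunc τ a * trunc τ b - a * b| ≤ (|a| ^ 4 + |b| ^ 4) / τ ^ 2 := by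
  have hτ2 : 0 < τ ^ 2 := by positivity
  rw [le_div_iff₀ hτ2]
  unfold trunc
  by_cases ha : |a| ≤ τ
  · by_cases hb : |b| ≤ τ
    · simp [ha, hb]; positivity
    · simp only [if_pos ha, if_neg hb, mul_zero, zero_sub, abs_neg]
      rw [mul_comm a b, add_comm (|a| ^ 4)]
      exact abmul τ b a hτ (lt_of_not_ge hb)
  · simp only [if_neg ha, zero_mul, zero_sub, abs_neg]
    exact abmul τ a b hτ (lt_of_not_ge ha)

/-- If the mean-zero random vector `X` satisfies `max_j E|X_j|⁴ ≤ ν⁴‖Σ‖²`, then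
`‖E X'(τ) X'(τ)ᵀ − E X Xᵀ‖_∞ ≤ 2ν⁴‖Σ‖²/τ²`, entrywise. Here `normSig` plays the role
of the operator norm `‖Σ‖` of the covariance `Σ = E X Xᵀ`. -/
theorem truncation_covariance_bound {Ω : Type*} [MeasurableSpace Ω]
    (μ : Measure Ω) [IsProbabilityMeasure μ] {d : ℕ}
    (X : Ω → Fin d → ℝ) (hmeas : ∀ j, Measurable fun ω => X ω j)
    (ν normSig τ : ℝ) (hν : 1 ≤ ν) (hnorm : 0 ≤ normSig) (hτ : 0 < τ)
    (hLp : ∀ j, MemLp (fun ω => X ω j) 4 μ)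
    (hmean : ∀ j, ∫ ω, X ω j ∂μ = 0)
    (hmom : ∀ j, ∫ ω, |X ω j| ^ 4 ∂μ ≤ ν ^ 4 * normSig ^ 2) :
    ∀ j j' : Fin d,
      |(∫ ω, trunc τ (X ω j) * trunc τ (X ω j') ∂μ) - ∫ ω, X ω j * X ω j' ∂μ| ≤
        2 * ν ^ 4 * normSig ^ 2 / τ ^ 2 := by
  intro j j'
  have htr : Measurable (trunc τ) := by
    unfold trunc
    exact measurable_id.ite (measurableSet_le measurable_abs measurable_const) measurable_const
  have htr_bd : ∀ x, |trunc τ x| ≤ τ := by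
    intro x; unfold trunc
    split
    · assumption
    · simpa using hτ.le
  have h4 : ∀ k, Integrable (fun ω => |X ω k| ^ 4) μ := by
    intro k
    have := ((hLp k).norm_rpow (by norm_num) (by norm_num)).integrable le_rfl
    refine this.congr (Filter.Eventually.of_forall fun ω => ?_)
    have h44 : (ENNReal.toReal 4) = ((4 : ℕ) : ℝ) := by norm_num
    simp only [h44, Real.rpow_natCast, Real.norm_eq_abs]
  have h2 : ∀ k, Integrable (fun ω => (X ω k) ^ 2) μ := fun k =>
    ((hLp k).mono_exponent (by norm_num)).integrable_sq
  have hf : Integrable (fun ω => trunc τ (X ω j) * trunc τ (X ω j')) μ := by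
    refine Integrable.mono' (integrable_const (τ * τ))
      (((htr.comp (hmeas j)).mul (htr.comp (hmeas j'))).aestronglyMeasurable)
      (Filter.Eventually.of_forall fun ω => ?_)
    rw [Real.norm_eq_abs, abs_mul]
    exact mul_le_mul (htr_bd _) (htr_bd _) (abs_nonneg _) hτ.le
  have hg : Integrable (fun ω => X ω j * X ω j') μ := by
    refine Integrable.mono' (((h2 j).add (h2 j')).div_const 2)
      (((hmeas j).mul (hmeas j')).aestronglyMeasurable)
      (Filter.Eventually.of_forall fun ω => ?_)
    simp only [Pi.add_apply]
    rw [Real.norm_eq_abs, abs_mul]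
    nlinarith [sq_nonneg (|X ω j| - |X ω j'|), sq_abs (X ω j), sq_abs (X ω j')]
  have hb : Integrable (fun ω => (|X ω j| ^ 4 + |X ω j'| ^ 4) / τ ^ 2) μ :=
    ((h4 j).add (h4 j')).div_const _
  rw [← integral_sub hf hg]
  calc |∫ ω, (trunc τ (X ω j) * trunc τ (X ω j') - X ω j * X ω j') ∂μ|
      ≤ ∫ ω, |trunc τ (X ω j) * trunc τ (X ω j') - X ω j * X ω j'| ∂μ :=
        by simpa [Real.norm_eq_abs] using
          norm_integral_le_integral_norm
            (fun ω => trunc τ (X ω j) * trunc τ (X ω j') - X ω j * X ω j')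
    _ ≤ ∫ ω, (|X ω j| ^ 4 + |X ω j'| ^ 4) / τ ^ 2 ∂μ := by
        refine integral_mono_of_nonneg (Filter.Eventually.of_forall fun ω => abs_nonneg _) hb
          (Filter.Eventually.of_forall fun ω => trunc_key τ _ _ hτ)
    _ = ((∫ ω, |X ω j| ^ 4 ∂μ) + ∫ ω, |X ω j'| ^ 4 ∂μ) / τ ^ 2 := by
        rw [integral_div, integral_add (h4 j) (h4 j')]
    _ ≤ (ν ^ 4 * normSig ^ 2 + ν ^ 4 * normSig ^ 2) / τ ^ 2 := by
        gcongr
        · exact hmom j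
        · exact hmom j'
    _ = 2 * ν ^ 4 * normSig ^ 2 / τ ^ 2 := by ring
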